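/- arXiv:2103.00079 — 4 statements merged into one kernel-verified Lean document; each statement's English description precedes it below -/
import Mathlib

section
/- Let K ≥ 2, m ≥ 1, λ ≥ 1 be integers and M = λm. Let A, β, δ > 0 satisfy β + A/δ ≤ K, let 𝒜 := δ(𝒵_K + i𝒵_K), and let H be the M×M matrix with H_{jj} = 1 for all j, H_{j,j−m} = −β for m < j ≤ M, and all other entries 0. Then for every y ∈ ℂ^M with ‖y‖_∞ ≤ A there exist q ∈ 𝒜^M and u ∈ ℂ^M with ‖u‖_∞ ≤ √2·δ such that y − q = Hu. -/
open scoped Real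
open Complex

set_option linter.unusedVariables false

noncomputable section

/-- Wrap-around distance on `ℝ` (distance to the nearest integer). -/
def distT (t : ℝ) : ℝ := ⨅ n : ℤ, |t - (n : ℝ)|

/-- Euclidean norm of a complex vector. -/
def norm2 {n : ℕ} (y : Fin n → ℂ) : ℝ := Real.sqrt (∑ i, ‖y i‖ ^ 2)

/-- Total variation norm of the atomic measure with amplitudes `a`. -/
def tvNorm {R : ℕ} (a : Fin R → ℂ) : ℝ := ∑ j, ‖a j‖

/-- First `M` Fourier coefficients of the atomic measure `∑ j, a j • δ_{t j}`. -/
def fourierCoeffs (M : ℕ) {R : ℕ} (a : Fin R → ℂ) (t : Fin R → ℝ) : Fin M → ℂ :=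
  fun k => ∑ j, a j * Complex.exp (-2 * (Real.pi : ℂ) * Complex.I * ((k : ℕ) : ℂ) * ((t j : ℝ) : ℂ))

/-- The function `w(t) = ∑_{k<λ} β^{-k} e^{-2πikt}`. -/
def wFun (β : ℝ) (lam : ℕ) (t : ℝ) : ℂ :=
  ∑ k ∈ Finset.range lam, ((β : ℂ))⁻¹ ^ k * Complex.exp (-2 * (Real.pi : ℂ) * Complex.I * (k : ℂ) * (t : ℂ))

/-- Condensation matrix `V = [I_m, β⁻¹ I_m, …, β^{-(λ-1)} I_m]`. -/
def Vmat (β : ℝ) (m lam : ℕ) : Matrix (Fin m) (Fin (lam * m)) ℂ :=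
  Matrix.of fun i j => if (j : ℕ) % m = (i : ℕ) then ((β : ℂ))⁻¹ ^ ((j : ℕ) / m) else 0

/-- Noise-shaping matrix `H` with `1` on the diagonal and `-β` on the `m`-th subdiagonal. -/
def Hmat (β : ℝ) (m M : ℕ) : Matrix (Fin M) (Fin M) ℂ :=
  Matrix.of fun j k => if (j : ℕ) = (k : ℕ) then 1 else if (j : ℕ) = (k : ℕ) + m then -(β : ℂ) else 0

/-- `𝒵_K = {-K+1, -K+3, …, K-1}`. -/
def ZK (K : ℕ) : Set ℤ := {n | ∃ k : ℕ, k < K ∧ n = -(K : ℤ) + 1 + 2 * (k : ℤ)}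

/-- The Cartesian alphabet `𝒜 = δ(𝒵_K + i𝒵_K)`. -/
def alphabet (K : ℕ) (δ : ℝ) : Set ℂ :=
  {z | ∃ a b : ℤ, a ∈ ZK K ∧ b ∈ ZK K ∧ z = (δ : ℂ) * ((a : ℂ) + (b : ℂ) * Complex.I)}

/-- `L` is a Lipschitz bound for `φ` with respect to the wrap-around distance. -/
def LipBnd (φ : ℝ → ℂ) (L : ℝ) : Prop := ∀ s t : ℝ, ‖φ s - φ t‖ ≤ L * distT (s - t)

/-- Lipschitz seminorm `|φ|_Lip` with respect to the wrap-around distance. -/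
def lipSemi (φ : ℝ → ℂ) : ℝ := sInf {L : ℝ | 0 ≤ L ∧ LipBnd φ L}

/-- Sup norm of `φ`. -/
def supNorm (φ : ℝ → ℂ) : ℝ := sSup {x : ℝ | ∃ t : ℝ, x = ‖φ t‖}

/-- Lipschitz norm `‖φ‖_Lip = max(‖φ‖_∞, |φ|_Lip)`. -/
def lipNorm (φ : ℝ → ℂ) : ℝ := max (supNorm φ) (lipSemi φ)

/-- Dual Lipschitz norm `‖ρ‖_{Lip*}` of the atomic measure `ρ = ∑ j, u j • δ_{r j}`. -/
def lipStar {R : ℕ} (u : Fin R → ℂ) (r : Fin R → ℝ) : ℝ :=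
  sSup {x : ℝ | ∃ φ : ℝ → ℂ, lipNorm φ ≤ 1 ∧ x = ‖∑ j, u j * φ (r j)‖}

/-- `𝓔_Lip(ρ,ν)` for atomic measures. -/
def ELip {R S : ℕ} (u : Fin R → ℂ) (r : Fin R → ℝ) (v : Fin S → ℂ) (s : Fin S → ℝ) : ℝ :=
  sSup {x : ℝ | ∃ φ : ℝ → ℂ, lipNorm φ ≤ 1 ∧
    x = ‖(∑ j, u j * φ (r j)) - (∑ k, v k * φ (s k))‖}

open scoped Classical in
/-- The neighborhood index set `𝓘_j^M`. -/
def nearIdx {R S : ℕ} (r : Fin R → ℝ) (s : Fin S → ℝ) (M : ℕ) (j : Fin R) : Finset (Fin S) :=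
  Finset.univ.filter fun k => distT (r j - s k) ≤ 0.3298 / ((M : ℝ) - 1)

open scoped Classical in
/-- The residual index set `𝓘_0^M`. -/
def farIdx {R S : ℕ} (r : Fin R → ℝ) (s : Fin S → ℝ) (M : ℕ) : Finset (Fin S) :=
  Finset.univ.filter fun k => ∀ j : Fin R, k ∉ nearIdx r s M j

/-- Amplitude error `𝓔_1^M(ρ,ν)`. -/
def E1 {R S : ℕ} (u : Fin R → ℂ) (r : Fin R → ℝ) (v : Fin S → ℂ) (s : Fin S → ℝ) (M : ℕ) : ℝ :=
  ⨆ j : Fin R, ‖u j - ∑ k ∈ nearIdx r s M j, v k‖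

/-- Support error `𝓔_2^M(ρ,ν)`. -/
def E2 {R S : ℕ} (u : Fin R → ℂ) (r : Fin R → ℝ) (v : Fin S → ℂ) (s : Fin S → ℝ) (M : ℕ) : ℝ :=
  ∑ j : Fin R, ∑ k ∈ nearIdx r s M j, ‖v k‖ * distT (r j - s k) ^ 2

/-- Spurious-atom error `𝓔_3^M(ρ,ν)`. -/
def E3 {R S : ℕ} (u : Fin R → ℂ) (r : Fin R → ℝ) (v : Fin S → ℂ) (s : Fin S → ℝ) (M : ℕ) : ℝ :=
  ∑ k ∈ farIdx r s M, ‖v k‖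

/-- Mixed `ℓ∞ + ℓ²` error `𝓔^π_{∞,2}(ρ,ν)` for a permutation `π`. -/
def EInf2 {S : ℕ} (u : Fin S → ℂ) (r : Fin S → ℝ) (v : Fin S → ℂ) (s : Fin S → ℝ)
    (σ : Equiv.Perm (Fin S)) : ℝ :=
  (⨆ j, distT (r j - s (σ j))) +
    Real.sqrt (∑ j, ‖u j - v (σ j)‖ ^ 2) / Real.sqrt (∑ j, ‖u j‖ ^ 2)

end

namespace Statement0Aux

noncomputable def round1 (K : ℕ) (δ x : ℝ) : ℤ :=
  -(K : ℤ) + 1 + 2 * (min ((K : ℤ) - 1) (max 0 ⌊(x / δ + K) / 2⌋))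

noncomputable def roundC (K : ℕ) (δ : ℝ) (z : ℂ) : ℂ :=
  (δ : ℂ) * ((round1 K δ z.re : ℂ) + (round1 K δ z.im : ℂ) * Complex.I)

lemma round1_mem (K : ℕ) (hK : 1 ≤ K) (δ x : ℝ) : round1 K δ x ∈ ZK K := by
  refine ⟨(min ((K : ℤ) - 1) (max 0 ⌊(x / δ + K) / 2⌋)).toNat, ?_, ?_⟩
  · have h1 : min ((K : ℤ) - 1) (max 0 ⌊(x / δ + K) / 2⌋) ≤ (K : ℤ) - 1 := min_le_left _ _
    omega
  · have h0 : (0 : ℤ) ≤ min ((K : ℤ) - 1) (max 0 ⌊(x / δ + K) / 2⌋) := by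
      refine le_min ?_ (le_max_left _ _)
      omega
    rw [round1, Int.toNat_of_nonneg h0]

lemma round1_close (K : ℕ) (hK : 1 ≤ K) (δ : ℝ) (hδ : 0 < δ) (x : ℝ)
    (hx : |x| ≤ (K : ℝ) * δ) : |x - δ * (round1 K δ x : ℝ)| ≤ δ := by
  set t : ℝ := (x / δ + K) / 2 with ht
  have ht0 : 0 ≤ t := by
    have : -((K : ℝ) * δ) ≤ x := (abs_le.mp hx).1
    have hxd : -(K : ℝ) ≤ x / δ := by
      rw [neg_le, ← neg_div]
      exact (div_le_iff₀ hδ).mpr (by linarith)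
    rw [ht]; linarith
  have htK : t ≤ (K : ℝ) := by
    have : x ≤ (K : ℝ) * δ := (abs_le.mp hx).2
    have hxd : x / δ ≤ (K : ℝ) := (div_le_iff₀ hδ).mpr (by linarith)
    rw [ht]; linarith
  have hmax : max 0 ⌊t⌋ = ⌊t⌋ := max_eq_right (Int.floor_nonneg.mpr ht0)
  set n : ℤ := min ((K : ℤ) - 1) ⌊t⌋ with hn
  have hround : round1 K δ x = -(K : ℤ) + 1 + 2 * n := by
    rw [round1, hmax]
  have hnt : (n : ℝ) ≤ t := by
    have hnle : n ≤ ⌊t⌋ := min_le_right _ _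
    calc (n : ℝ) ≤ (⌊t⌋ : ℝ) := Int.cast_le.mpr hnle
      _ ≤ t := Int.floor_le t
  have htn : t ≤ (n : ℝ) + 1 := by
    rcases le_or_gt ⌊t⌋ ((K : ℤ) - 1) with h | h
    · have hn' : n = ⌊t⌋ := min_eq_right h
      rw [hn']
      exact le_of_lt (Int.lt_floor_add_one t)
    · have hn' : n = (K : ℤ) - 1 := min_eq_left (le_of_lt h)
      rw [hn']
      push_cast
      linarith
  have hx' : x = δ * (2 * t - K) := by
    rw [ht]; field_simp; ring
  have : x - δ * (round1 K δ x : ℝ) = δ * (2 * (t - n) - 1) := by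
    rw [hround, hx']
    push_cast
    ring
  rw [this, abs_mul, abs_of_pos hδ]
  have : |2 * (t - (n : ℝ)) - 1| ≤ 1 := by
    rw [abs_le]; constructor <;> linarith
  nlinarith

lemma roundC_mem (K : ℕ) (hK : 1 ≤ K) (δ : ℝ) (z : ℂ) :
    roundC K δ z ∈ alphabet K δ :=
  ⟨round1 K δ z.re, round1 K δ z.im, round1_mem K hK δ _, round1_mem K hK δ _, rfl⟩

lemma roundC_close (K : ℕ) (hK : 1 ≤ K) (δ : ℝ) (hδ : 0 < δ) (z : ℂ)
    (hre : |z.re| ≤ (K : ℝ) * δ) (him : |z.im| ≤ (K : ℝ) * δ) :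
    |(z - roundC K δ z).re| ≤ δ ∧ |(z - roundC K δ z).im| ≤ δ := by
  have h1 : (z - roundC K δ z).re = z.re - δ * (round1 K δ z.re : ℝ) := by
    simp [roundC, Complex.sub_re, Complex.mul_re, Complex.mul_im]
  have h2 : (z - roundC K δ z).im = z.im - δ * (round1 K δ z.im : ℝ) := by
    simp [roundC, Complex.sub_im, Complex.mul_re, Complex.mul_im]
  rw [h1, h2]
  exact ⟨round1_close K hK δ hδ _ hre, round1_close K hK δ hδ _ him⟩

noncomputable def uSeq (K m : ℕ) (β δ : ℝ) (y : ℕ → ℂ) (j : ℕ) : ℂ :=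
  (y j + (if h : 0 < m ∧ m ≤ j then (β : ℂ) * uSeq K m β δ y (j - m) else 0)) -
    roundC K δ (y j + (if h : 0 < m ∧ m ≤ j then (β : ℂ) * uSeq K m β δ y (j - m) else 0))
termination_by j
decreasing_by all_goals omega

noncomputable def vSeq (K m : ℕ) (β δ : ℝ) (y : ℕ → ℂ) (j : ℕ) : ℂ :=
  y j + (if h : 0 < m ∧ m ≤ j then (β : ℂ) * uSeq K m β δ y (j - m) else 0)

lemma uSeq_eq (K m : ℕ) (β δ : ℝ) (y : ℕ → ℂ) (j : ℕ) :
    uSeq K m β δ y j = vSeq K m β δ y j - roundC K δ (vSeq K m β δ y j) := by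
  rw [uSeq, vSeq]

end Statement0Aux

/-- existence of the noise-shaping quantizer (Lemma, special case of
Chou–Güntürk): for `β + A/δ ≤ K` and any `y` with `‖y‖_∞ ≤ A` there are `q ∈ 𝒜^M` and
`u` with `‖u‖_∞ ≤ √2 δ` such that `y - q = H u`. -/
theorem statement0 (K m lam M : ℕ) (hK : 2 ≤ K) (hm : 1 ≤ m) (hlam : 1 ≤ lam)
    (hM : M = lam * m) (A β δ : ℝ) (hA : 0 < A) (hβ : 0 < β) (hδ : 0 < δ)
    (hparam : β + A / δ ≤ (K : ℝ))
    (y : Fin M → ℂ) (hy : ∀ j, ‖y j‖ ≤ A) :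
    ∃ q u : Fin M → ℂ,
      (∀ j, q j ∈ alphabet K δ) ∧
      (∀ j, ‖u j‖ ≤ Real.sqrt 2 * δ) ∧
      y - q = (Hmat β m M).mulVec u := by
  classical
  have hK1 : 1 ≤ K := by omega
  set y' : ℕ → ℂ := fun n => if h : n < M then y ⟨n, h⟩ else 0 with hy'
  have hy'A : ∀ n, ‖y' n‖ ≤ A := by
    intro n
    by_cases h : n < M
    · simpa [hy', h] using hy ⟨n, h⟩
    · simp [hy', h]; exact le_of_lt hA
  have hKδ : A + β * δ ≤ (K : ℝ) * δ := by
    have h1 := mul_le_mul_of_nonneg_right hparam (le_of_lt hδ)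
    rw [add_mul, div_mul_cancel₀ A (ne_of_gt hδ)] at h1
    linarith
  have key : ∀ j : ℕ, |(Statement0Aux.uSeq K m β δ y' j).re| ≤ δ ∧
      |(Statement0Aux.uSeq K m β δ y' j).im| ≤ δ := by
    intro j
    induction j using Nat.strong_induction_on with
    | _ j ih =>
      have hv : |(Statement0Aux.vSeq K m β δ y' j).re| ≤ (K : ℝ) * δ ∧
          |(Statement0Aux.vSeq K m β δ y' j).im| ≤ (K : ℝ) * δ := by
        unfold Statement0Aux.vSeq
        have hyre : |(y' j).re| ≤ A := (Complex.abs_re_le_norm _).trans (hy'A j)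
        have hyim : |(y' j).im| ≤ A := (Complex.abs_im_le_norm _).trans (hy'A j)
        by_cases h : 0 < m ∧ m ≤ j
        · have hu := ih (j - m) (by omega)
          rw [dif_pos h]
          constructor
          · calc |((y' j) + (β : ℂ) * Statement0Aux.uSeq K m β δ y' (j - m)).re|
                ≤ |(y' j).re| + |((β : ℂ) * Statement0Aux.uSeq K m β δ y' (j - m)).re| := by
                  rw [Complex.add_re]; exact abs_add_le _ _
              _ ≤ A + β * δ := by
                  have : ((β : ℂ) * Statement0Aux.uSeq K m β δ y' (j - m)).re
                      = β * (Statement0Aux.uSeq K m β δ y' (j - m)).re := by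
                    simp [Complex.mul_re]
                  rw [this, abs_mul, abs_of_pos hβ]
                  have := mul_le_mul_of_nonneg_left hu.1 (le_of_lt hβ)
                  linarith
              _ ≤ (K : ℝ) * δ := hKδ
          · calc |((y' j) + (β : ℂ) * Statement0Aux.uSeq K m β δ y' (j - m)).im|
                ≤ |(y' j).im| + |((β : ℂ) * Statement0Aux.uSeq K m β δ y' (j - m)).im| := by
                  rw [Complex.add_im]; exact abs_add_le _ _
              _ ≤ A + β * δ := by
                  have : ((β : ℂ) * Statement0Aux.uSeq K m β δ y' (j - m)).im
                      = β * (Statement0Aux.uSeq K m β δ y' (j - m)).im := by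
                    simp [Complex.mul_im]
                  rw [this, abs_mul, abs_of_pos hβ]
                  have := mul_le_mul_of_nonneg_left hu.2 (le_of_lt hβ)
                  linarith
              _ ≤ (K : ℝ) * δ := hKδ
        · rw [dif_neg h]
          have hAK : A ≤ (K : ℝ) * δ := by nlinarith
          constructor
          · simpa using hyre.trans hAK
          · simpa using hyim.trans hAK
      rw [Statement0Aux.uSeq_eq]
      exact Statement0Aux.roundC_close K hK1 δ hδ _ hv.1 hv.2
  refine ⟨fun j => Statement0Aux.roundC K δ (Statement0Aux.vSeq K m β δ y' (j : ℕ)),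
      fun j => Statement0Aux.uSeq K m β δ y' (j : ℕ), ?_, ?_, ?_⟩
  · intro j
    exact Statement0Aux.roundC_mem K hK1 δ _
  · intro j
    have h1 := Complex.norm_le_sqrt_two_mul_max (Statement0Aux.uSeq K m β δ y' (j : ℕ))
    have h2 : max |(Statement0Aux.uSeq K m β δ y' (j : ℕ)).re|
        |(Statement0Aux.uSeq K m β δ y' (j : ℕ)).im| ≤ δ :=
      max_le (key _).1 (key _).2
    calc ‖Statement0Aux.uSeq K m β δ y' (j : ℕ)‖
        ≤ Real.sqrt 2 * max |(Statement0Aux.uSeq K m β δ y' (j : ℕ)).re|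
            |(Statement0Aux.uSeq K m β δ y' (j : ℕ)).im| := h1
      _ ≤ Real.sqrt 2 * δ := mul_le_mul_of_nonneg_left h2 (Real.sqrt_nonneg 2)
  · funext j
    have hjM : (j : ℕ) < M := j.isLt
    have hyj : y j = y' (j : ℕ) := by simp [hy', hjM]
    have hmul : (Hmat β m M).mulVec (fun k => Statement0Aux.uSeq K m β δ y' (k : ℕ)) j
        = Statement0Aux.uSeq K m β δ y' (j : ℕ) +
          (if 0 < m ∧ m ≤ (j : ℕ) then
            -(β : ℂ) * Statement0Aux.uSeq K m β δ y' ((j : ℕ) - m) else 0) := by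
      rw [Matrix.mulVec]
      by_cases h : m ≤ (j : ℕ)
      · have hj' : (j : ℕ) - m < M := by omega
        set j' : Fin M := ⟨(j : ℕ) - m, hj'⟩ with hj'def
        have hne : j ≠ j' := by
          intro hEq
          have : (j : ℕ) = (j : ℕ) - m := congrArg Fin.val hEq
          omega
        have hsum : ∑ k, Hmat β m M j k * Statement0Aux.uSeq K m β δ y' (k : ℕ)
            = ∑ k ∈ ({j, j'} : Finset (Fin M)),
                Hmat β m M j k * Statement0Aux.uSeq K m β δ y' (k : ℕ) := by
          refine (Finset.sum_subset (Finset.subset_univ _) ?_).symm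
          intro k _ hk
          simp only [Finset.mem_insert, Finset.mem_singleton] at hk
          push_neg at hk
          have h1 : (j : ℕ) ≠ (k : ℕ) := fun hc => hk.1 (Fin.ext hc.symm)
          have h2 : (j : ℕ) ≠ (k : ℕ) + m := by
            intro hc
            exact hk.2 (Fin.ext (show (k : ℕ) = (j : ℕ) - m by omega))
          simp [Hmat, h1, h2]
        rw [dotProduct, hsum, Finset.sum_pair hne]
        have hjj : Hmat β m M j j = 1 := by simp [Hmat]
        have hjj' : Hmat β m M j j' = -(β : ℂ) := by
          have h1 : (j : ℕ) ≠ (j' : ℕ) := fun hc => hne (Fin.ext hc)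
          have h2 : (j : ℕ) = (j' : ℕ) + m := by show (j : ℕ) = (j : ℕ) - m + m; omega
          show (if (j : ℕ) = (j' : ℕ) then 1 else if (j : ℕ) = (j' : ℕ) + m then -(β : ℂ) else 0) = -(β : ℂ)
          rw [if_neg h1, if_pos h2]
        rw [hjj, hjj', if_pos ⟨by omega, h⟩]
        show 1 * _ + _ = _
        rw [one_mul]
      · rw [if_neg (by tauto)]
        rw [dotProduct]
        rw [Finset.sum_eq_single j]
        · simp [Hmat]
        · intro k _ hk
          have h1 : (j : ℕ) ≠ (k : ℕ) := fun hc => hk (Fin.ext hc.symm)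
          have h2 : (j : ℕ) ≠ (k : ℕ) + m := by omega
          simp [Hmat, h1, h2]
        · intro hj
          exact absurd (Finset.mem_univ j) hj
    rw [Pi.sub_apply, hmul, hyj]
    rw [Statement0Aux.uSeq_eq]
    unfold Statement0Aux.vSeq
    by_cases h : 0 < m ∧ m ≤ (j : ℕ)
    · rw [dif_pos h, if_pos h]
      ring
    · rw [dif_neg h, if_neg h]
      ring
end

section
/- Let β > 1 be real and λ ≥ 1 an integer, and define w(t) := Σ_{k=0}^{λ−1} β^{−k} e^{−2πikt} and C_β := (β+1)/(β−1). Then for all s, t ∈ ℝ, |1/w(s) − 1/w(t)| ≤ C_β² · (4πλβ/(β−1)²) · |s − t|_𝕋, where |t|_𝕋 := min_{n∈ℤ} |t − n|. -/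
open scoped Real
open Complex

set_option linter.unusedVariables false

section Helpers
lemma round_nearest (x : ℝ) (n : ℤ) : |x - round x| ≤ |x - n| := by
  rcases eq_or_ne n (round x) with h | h
  · rw [h]
  · have h1 : (1 : ℝ) ≤ |(n : ℝ) - round x| := by
      rw [← Int.cast_sub, ← Int.cast_abs]
      exact_mod_cast Int.one_le_abs (sub_ne_zero_of_ne h)
    have h2 : |x - round x| ≤ 1 / 2 := abs_sub_round x
    have h3 : |(n : ℝ) - round x| ≤ |x - n| + |x - round x| := by
      calc |(n : ℝ) - round x| = |(x - round x) - (x - n)| := by ring_nf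
        _ ≤ |x - round x| + |x - n| := abs_sub _ _
        _ = |x - n| + |x - round x| := by ring
    linarith

lemma distT_eq (x : ℝ) : distT x = |x - round x| := by
  apply le_antisymm
  · exact ciInf_le ⟨0, fun y ⟨n, hn⟩ => hn ▸ abs_nonneg _⟩ (round x)
  · exact le_ciInf fun n => round_nearest x n

lemma key_exp (θ φ : ℝ) : ‖Complex.exp (θ * I) - Complex.exp (φ * I)‖ ≤ 2 * |θ - φ| := by
  have hfac : Complex.exp (θ * I) - Complex.exp (φ * I)
      = Complex.exp (φ * I) * (Complex.exp (((θ - φ : ℝ) : ℂ) * I) - 1) := by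
    rw [mul_sub, mul_one, ← Complex.exp_add]
    congr 1
    push_cast
    ring
  rw [hfac, norm_mul, Complex.norm_exp_ofReal_mul_I, one_mul]
  rcases le_or_gt |θ - φ| 1 with h | h
  · have h1 : ‖((θ - φ : ℝ) : ℂ) * I‖ ≤ 1 := by
      rw [norm_mul, Complex.norm_I, mul_one, Complex.norm_real, Real.norm_eq_abs]; exact h
    have h2 := Complex.norm_exp_sub_one_le h1
    rw [norm_mul, Complex.norm_I, mul_one, Complex.norm_real, Real.norm_eq_abs] at h2
    exact h2
  · calc ‖Complex.exp (((θ - φ : ℝ) : ℂ) * I) - 1‖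
        ≤ ‖Complex.exp (((θ - φ : ℝ) : ℂ) * I)‖ + ‖(1 : ℂ)‖ := norm_sub_le _ _
      _ = 2 := by
          rw [Complex.norm_exp_ofReal_mul_I, norm_one]; norm_num
      _ ≤ 2 * |θ - φ| := by nlinarith

lemma term_bound (k : ℕ) (s t : ℝ) :
    ‖Complex.exp (-2 * (Real.pi : ℂ) * I * (k : ℂ) * (s : ℂ))
      - Complex.exp (-2 * (Real.pi : ℂ) * I * (k : ℂ) * (t : ℂ))‖
      ≤ 4 * Real.pi * k * distT (s - t) := by
  set n := round (s - t) with hn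
  have hd : distT (s - t) = |s - t - n| := distT_eq _
  have hshift : Complex.exp (-2 * (Real.pi : ℂ) * I * (k : ℂ) * (s : ℂ))
      = Complex.exp (((-2 * Real.pi * k * (t + (s - t - n)) : ℝ) : ℂ) * I) := by
    have : (-2 * (Real.pi : ℂ) * I * (k : ℂ) * (s : ℂ))
        = ((-2 * Real.pi * k * (t + (s - t - n)) : ℝ) : ℂ) * I
          + ((-(k : ℤ) * n : ℤ) : ℂ) * (2 * Real.pi) * I := by
      push_cast; ring
    rw [this, Complex.exp_add]
    have h1 : (((-(k : ℤ) * n : ℤ) : ℂ) * (2 * Real.pi) * I)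
        = ((-(k : ℤ) * n : ℤ) : ℂ) * (2 * (Real.pi : ℂ) * I) := by ring
    rw [h1, Complex.exp_int_mul_two_pi_mul_I, mul_one]
  have ht : Complex.exp (-2 * (Real.pi : ℂ) * I * (k : ℂ) * (t : ℂ))
      = Complex.exp (((-2 * Real.pi * k * t : ℝ) : ℂ) * I) := by
    congr 1; push_cast; ring
  rw [hshift, ht]
  calc ‖_ - _‖ ≤ 2 * |(-2 * Real.pi * k * (t + (s - t - n))) - (-2 * Real.pi * k * t)| :=
        key_exp _ _
    _ = 4 * Real.pi * k * |s - t - n| := by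
        have : (-2 * Real.pi * k * (t + (s - t - n))) - (-2 * Real.pi * k * t)
            = (-2 * Real.pi * k) * (s - t - n) := by ring
        rw [this, abs_mul, abs_of_nonpos (by nlinarith [Real.pi_pos, Nat.cast_nonneg (α := ℝ) k] : (-2 * Real.pi * (k:ℝ)) ≤ 0)]
        ring
    _ = 4 * Real.pi * k * distT (s - t) := by rw [hd]

lemma wFun_eq_geom (β : ℝ) (lam : ℕ) (t : ℝ) :
    wFun β lam t = ∑ k ∈ Finset.range lam,
      (((β : ℂ))⁻¹ * Complex.exp (-2 * (Real.pi : ℂ) * I * (t : ℂ))) ^ k := by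
  unfold wFun
  refine Finset.sum_congr rfl fun k _ => ?_
  rw [mul_pow, ← Complex.exp_nat_mul]
  congr 2
  push_cast; ring

lemma wFun_lower (β : ℝ) (hβ : 1 < β) (lam : ℕ) (hlam : 1 ≤ lam) (t : ℝ) :
    (β - 1) / (β + 1) ≤ ‖wFun β lam t‖ := by
  set z : ℂ := ((β : ℂ))⁻¹ * Complex.exp (-2 * (Real.pi : ℂ) * I * (t : ℂ)) with hz
  have hβ0 : (0:ℝ) < β := by linarith
  have hzn : ‖z‖ = β⁻¹ := by
    rw [hz, norm_mul, norm_inv, Complex.norm_real, Real.norm_eq_abs,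
      abs_of_pos hβ0]
    have : (-2 * (Real.pi : ℂ) * I * (t : ℂ)) = ((-2 * Real.pi * t : ℝ) : ℂ) * I := by
      push_cast; ring
    rw [this, Complex.norm_exp_ofReal_mul_I, mul_one]
  have hzlt : ‖z‖ < 1 := by rw [hzn]; exact inv_lt_one_of_one_lt₀ hβ
  have hz1 : z ≠ 1 := fun h => by simp [h] at hzlt
  have hgeom : wFun β lam t = (z ^ lam - 1) / (z - 1) := by
    rw [wFun_eq_geom, ← hz, geom_sum_eq hz1]
  rw [hgeom, norm_div]
  have hnum : 1 - (β⁻¹) ≤ ‖z ^ lam - 1‖ := by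
    have h1 : ‖z ^ lam‖ ≤ β⁻¹ := by
      rw [norm_pow, hzn]
      calc (β⁻¹) ^ lam ≤ (β⁻¹) ^ 1 :=
            pow_le_pow_of_le_one (by positivity) (le_of_lt (inv_lt_one_of_one_lt₀ hβ)) hlam
        _ = β⁻¹ := pow_one _
    have := norm_sub_norm_le (1 : ℂ) (z ^ lam)
    have h2 : ‖(1:ℂ) - z ^ lam‖ = ‖z ^ lam - 1‖ := by rw [norm_sub_rev]
    simp only [norm_one] at this
    linarith [this, h2 ▸ this]
  have hden : ‖z - 1‖ ≤ 1 + β⁻¹ := by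
    calc ‖z - 1‖ ≤ ‖z‖ + ‖(1:ℂ)‖ := norm_sub_le _ _
      _ = β⁻¹ + 1 := by rw [hzn, norm_one]
      _ = 1 + β⁻¹ := by ring
  have hden0 : (0:ℝ) < 1 + β⁻¹ := by positivity
  have hnum0 : (0:ℝ) < 1 - β⁻¹ := by
    have := inv_lt_one_of_one_lt₀ hβ; linarith
  have hd0 : (0:ℝ) < ‖z - 1‖ := by
    rw [norm_pos_iff]; exact sub_ne_zero_of_ne hz1
  calc (β - 1) / (β + 1) = (1 - β⁻¹) / (1 + β⁻¹) := by
        rw [div_eq_div_iff (by linarith) (by positivity)]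
        field_simp
      _ ≤ ‖z ^ lam - 1‖ / ‖z - 1‖ := by
        apply div_le_div₀ (norm_nonneg _) hnum hd0 hden

lemma sum_k_geom (β : ℝ) (hβ : 1 < β) (lam : ℕ) :
    ∑ k ∈ Finset.range lam, (k : ℝ) * (β⁻¹) ^ k ≤ β / (β - 1) ^ 2 := by
  have hx : ‖(β⁻¹ : ℝ)‖ < 1 := by
    rw [Real.norm_eq_abs, abs_of_pos (by positivity)]
    exact inv_lt_one_of_one_lt₀ hβ
  have hs := hasSum_coe_mul_geometric_of_norm_lt_one hx
  have h1 : ∑ k ∈ Finset.range lam, (k : ℝ) * (β⁻¹) ^ k ≤ β⁻¹ / (1 - β⁻¹) ^ 2 :=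
    sum_le_hasSum _ (fun k _ => by positivity) hs
  have h2 : β⁻¹ / (1 - β⁻¹) ^ 2 = β / (β - 1) ^ 2 := by
    rw [div_eq_div_iff]
    · field_simp
    · have : 0 < 1 - β⁻¹ := by
        have := inv_lt_one_of_one_lt₀ hβ; linarith
      positivity
    · have : 0 < β - 1 := by linarith
      positivity
  linarith

lemma distT_nonneg (x : ℝ) : 0 ≤ distT x := by rw [distT_eq]; exact abs_nonneg _

lemma wFun_lip (β : ℝ) (hβ : 1 < β) (lam : ℕ) (s t : ℝ) :
    ‖wFun β lam s - wFun β lam t‖ ≤ 4 * Real.pi * (β / (β - 1) ^ 2) * distT (s - t) := by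
  have hβ0 : (0:ℝ) < β := by linarith
  have h1 : wFun β lam s - wFun β lam t = ∑ k ∈ Finset.range lam,
      ((β : ℂ))⁻¹ ^ k * (Complex.exp (-2 * (Real.pi : ℂ) * I * (k : ℂ) * (s : ℂ))
        - Complex.exp (-2 * (Real.pi : ℂ) * I * (k : ℂ) * (t : ℂ))) := by
    unfold wFun
    rw [← Finset.sum_sub_distrib]
    exact Finset.sum_congr rfl fun k _ => by ring
  rw [h1]
  calc ‖∑ k ∈ Finset.range lam, _‖
      ≤ ∑ k ∈ Finset.range lam, ‖((β : ℂ))⁻¹ ^ k *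
          (Complex.exp (-2 * (Real.pi : ℂ) * I * (k : ℂ) * (s : ℂ))
            - Complex.exp (-2 * (Real.pi : ℂ) * I * (k : ℂ) * (t : ℂ)))‖ :=
        norm_sum_le _ _
    _ ≤ ∑ k ∈ Finset.range lam, (β⁻¹) ^ k * (4 * Real.pi * k * distT (s - t)) := by
        refine Finset.sum_le_sum fun k _ => ?_
        rw [norm_mul, norm_pow, norm_inv, Complex.norm_real, Real.norm_eq_abs,
          abs_of_pos hβ0]
        exact mul_le_mul_of_nonneg_left (term_bound k s t) (by positivity)
    _ = (∑ k ∈ Finset.range lam, (k : ℝ) * (β⁻¹) ^ k) * (4 * Real.pi * distT (s - t)) := by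
        rw [Finset.sum_mul]
        exact Finset.sum_congr rfl fun k _ => by ring
    _ ≤ (β / (β - 1) ^ 2) * (4 * Real.pi * distT (s - t)) := by
        refine mul_le_mul_of_nonneg_right (sum_k_geom β hβ lam) ?_
        have := Real.pi_pos
        have := distT_nonneg (s - t)
        positivity
    _ = 4 * Real.pi * (β / (β - 1) ^ 2) * distT (s - t) := by ring


end Helpers

/-- `1/w` is Lipschitz with constant `C_β² · 4πλβ/(β-1)²` with respect to
the wrap-around distance. -/
theorem statement4 (β : ℝ) (hβ : 1 < β) (lam : ℕ) (hlam : 1 ≤ lam) (s t : ℝ) :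
    ‖(wFun β lam s)⁻¹ - (wFun β lam t)⁻¹‖ ≤
      ((β + 1) / (β - 1)) ^ 2 * (4 * Real.pi * (lam : ℝ) * β / (β - 1) ^ 2) * distT (s - t) := by
  have hβ1 : (0:ℝ) < β - 1 := by linarith
  have hc : (0:ℝ) < (β - 1) / (β + 1) := by positivity
  have hws := wFun_lower β hβ lam hlam s
  have hwt := wFun_lower β hβ lam hlam t
  have hs0 : wFun β lam s ≠ 0 := by
    intro h; rw [h, norm_zero] at hws; linarith
  have ht0 : wFun β lam t ≠ 0 := by
    intro h; rw [h, norm_zero] at hwt; linarith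
  have heq : (wFun β lam s)⁻¹ - (wFun β lam t)⁻¹
      = (wFun β lam t - wFun β lam s) * ((wFun β lam s)⁻¹ * (wFun β lam t)⁻¹) := by
    field_simp
  rw [heq, norm_mul, norm_mul, norm_inv, norm_inv]
  have hinv_s : ‖wFun β lam s‖⁻¹ ≤ ((β - 1) / (β + 1))⁻¹ :=
    inv_anti₀ hc hws
  have hinv_t : ‖wFun β lam t‖⁻¹ ≤ ((β - 1) / (β + 1))⁻¹ :=
    inv_anti₀ hc hwt
  have hlipval := wFun_lip β hβ lam t s
  have hneg : ∀ x : ℝ, distT (-x) ≤ distT x := by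
    intro x
    rw [distT_eq x]
    calc distT (-x) ≤ |(-x) - ((-(round x) : ℤ) : ℝ)| :=
          ciInf_le ⟨0, fun y ⟨n, hn⟩ => hn ▸ abs_nonneg _⟩ (-(round x))
      _ = |x - round x| := by push_cast; rw [← abs_neg]; ring_nf
  have hd : distT (t - s) = distT (s - t) := by
    rw [show t - s = -(s - t) by ring]
    refine le_antisymm (hneg _) ?_
    have := hneg (-(s - t))
    rwa [neg_neg] at this
  rw [hd] at hlipval
  have hdnn := distT_nonneg (s - t)
  have hpi := Real.pi_pos
  have hC : ((β - 1) / (β + 1))⁻¹ = (β + 1) / (β - 1) := by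
    rw [inv_div]
  rw [hC] at hinv_s hinv_t
  have hCpos : (0:ℝ) < (β + 1) / (β - 1) := by positivity
  calc ‖wFun β lam t - wFun β lam s‖ * (‖wFun β lam s‖⁻¹ * ‖wFun β lam t‖⁻¹)
      ≤ (4 * Real.pi * (β / (β - 1) ^ 2) * distT (s - t)) *
          ((β + 1) / (β - 1) * ((β + 1) / (β - 1))) := by
        refine mul_le_mul hlipval ?_ (by positivity) (by positivity)
        exact mul_le_mul hinv_s hinv_t (by positivity) hCpos.le
    _ ≤ ((β + 1) / (β - 1)) ^ 2 * (4 * Real.pi * (lam : ℝ) * β / (β - 1) ^ 2) * distT (s - t) := by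
        have hlam1 : (1:ℝ) ≤ (lam : ℝ) := by exact_mod_cast hlam
        have key : 4 * Real.pi * (β / (β - 1) ^ 2) ≤ 4 * Real.pi * (lam : ℝ) * β / (β - 1) ^ 2 := by
          rw [mul_div_assoc]
          have : β / (β - 1) ^ 2 ≤ (lam : ℝ) * (β / (β - 1) ^ 2) := by
            nlinarith [div_pos (by linarith : (0:ℝ) < β) (by positivity : (0:ℝ) < (β-1)^2)]
          calc 4 * Real.pi * (β / (β - 1) ^ 2) ≤ 4 * Real.pi * ((lam : ℝ) * (β / (β - 1) ^ 2)) :=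
                by nlinarith
            _ = 4 * Real.pi * (lam : ℝ) * (β / (β - 1) ^ 2) := by ring
          
        have e1 : (4 * Real.pi * (β / (β - 1) ^ 2) * distT (s - t)) *
            ((β + 1) / (β - 1) * ((β + 1) / (β - 1)))
            = ((β + 1) / (β - 1)) ^ 2 * ((4 * Real.pi * (β / (β - 1) ^ 2)) * distT (s - t)) := by
          ring
        have e2 : ((β + 1) / (β - 1)) ^ 2 * (4 * Real.pi * (lam : ℝ) * β / (β - 1) ^ 2) *
            distT (s - t)
            = ((β + 1) / (β - 1)) ^ 2 * ((4 * Real.pi * (lam : ℝ) * β / (β - 1) ^ 2) *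
              distT (s - t)) := by
          ring
        rw [e1, e2]
        exact mul_le_mul_of_nonneg_left (mul_le_mul_of_nonneg_right key hdnn) (sq_nonneg _)
end

section
/- Let β > 1, let m, λ ≥ 1 be integers, and M = λm. Let V := [I_m, β^{−1}I_m, …, β^{−(λ−1)}I_m] be the m×M matrix of λ horizontal blocks, and let H be the M×M matrix with H_{jj} = 1 for all j, H_{j,j−m} = −β for m < j ≤ M, and all other entries 0. Then ‖VH‖_{∞→2} = √m · β^{−(λ−1)}. -/
open scoped Real
open Complex

set_option linter.unusedVariables false

lemma aux_entry (β : ℝ) (hβ : 1 < β) (m lam : ℕ) (hm : 1 ≤ m) (hlam : 1 ≤ lam)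
    (i : Fin m) (k : Fin (lam * m)) :
    (Vmat β m lam * Hmat β m (lam * m)) i k =
      if (k : ℕ) = (lam - 1) * m + (i : ℕ) then ((β : ℂ))⁻¹ ^ (lam - 1) else 0 := by
  have hβ0 : (β : ℂ) ≠ 0 := by
    simp only [ne_eq, Complex.ofReal_eq_zero]; linarith
  have hMsplit : lam * m = (lam - 1) * m + m := by
    have h3 : lam = (lam - 1) + 1 := by omega
    nth_rewrite 1 [h3]; ring
  rw [Matrix.mul_apply]
  by_cases hkm : (k : ℕ) + m < lam * m
  · -- not in last block
    set k' : Fin (lam * m) := ⟨(k : ℕ) + m, hkm⟩ with hk'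
    have hkk' : k ≠ k' := by
      intro h
      have := congrArg Fin.val h
      simp [hk'] at this
      omega
    have hstep : ∀ j : Fin (lam * m), Vmat β m lam i j * Hmat β m (lam * m) j k =
        (if j = k then Vmat β m lam i k else 0) +
        (if j = k' then -(β : ℂ) * Vmat β m lam i k' else 0) := by
      intro j
      simp only [Hmat, Matrix.of_apply]
      by_cases h1 : j = k
      · subst h1
        rw [if_pos rfl, if_pos rfl, mul_one, if_neg hkk', add_zero]
      · have h1' : ¬ (j : ℕ) = (k : ℕ) := fun h => h1 (Fin.ext h)
        rw [if_neg h1', if_neg h1]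
        by_cases h2 : j = k'
        · subst h2
          rw [if_pos (by simp [hk']), if_pos rfl, zero_add, mul_comm]
        · have h2' : ¬ (j : ℕ) = (k : ℕ) + m := fun h => h2 (Fin.ext h)
          rw [if_neg h2', if_neg h2, mul_zero, add_zero]
    rw [Finset.sum_congr rfl (fun j _ => hstep j), Finset.sum_add_distrib,
      Finset.sum_ite_eq' Finset.univ k, Finset.sum_ite_eq' Finset.univ k',
      if_pos (Finset.mem_univ k), if_pos (Finset.mem_univ k')]
    have hklt : (k : ℕ) < (lam - 1) * m := by omega
    have hne : ¬ (k : ℕ) = (lam - 1) * m + (i : ℕ) := by omega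
    rw [if_neg hne]
    simp only [Vmat, Matrix.of_apply, hk']
    have hmod : ((k : ℕ) + m) % m = (k : ℕ) % m := Nat.add_mod_right _ _
    have hdiv : ((k : ℕ) + m) / m = (k : ℕ) / m + 1 := Nat.add_div_right _ (by omega)
    rw [hmod, hdiv]
    by_cases hi : (k : ℕ) % m = (i : ℕ)
    · rw [if_pos hi, if_pos hi, pow_succ]
      field_simp
      ring
    · simp [hi]
  · -- last block
    have hstep : ∀ j : Fin (lam * m), Vmat β m lam i j * Hmat β m (lam * m) j k =
        (if j = k then Vmat β m lam i k else 0) := by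
      intro j
      simp only [Hmat, Matrix.of_apply]
      by_cases h1 : j = k
      · subst h1
        rw [if_pos rfl, if_pos rfl, mul_one]
      · have h1' : ¬ (j : ℕ) = (k : ℕ) := fun h => h1 (Fin.ext h)
        have h2' : ¬ (j : ℕ) = (k : ℕ) + m := by
          have := j.isLt; omega
        rw [if_neg h1', if_neg h1, if_neg h2', mul_zero]
    rw [Finset.sum_congr rfl (fun j _ => hstep j),
      Finset.sum_ite_eq' Finset.univ k, if_pos (Finset.mem_univ k)]
    have hk1 : (k : ℕ) < lam * m := k.isLt
    have hge : (lam - 1) * m ≤ (k : ℕ) := by omega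
    have hdiv : (k : ℕ) / m = lam - 1 := by
      have := Nat.div_add_mod (k : ℕ) m
      have hlt : (k : ℕ) % m < m := Nat.mod_lt _ (by omega)
      rcases Nat.lt_trichotomy ((k : ℕ) / m) (lam - 1) with h | h | h
      · exfalso
        have hmul : ((k : ℕ) / m + 1) * m ≤ (lam - 1) * m := Nat.mul_le_mul_right m h
        have e1 : ((k : ℕ) / m + 1) * m = ((k : ℕ) / m) * m + m := by ring
        have e2 : ((k : ℕ) / m) * m = m * ((k : ℕ) / m) := Nat.mul_comm _ _
        have h0 : 0 ≤ (k : ℕ) % m := Nat.zero_le _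
        linarith
      · exact h
      · exfalso
        have hmul : (lam - 1 + 1) * m ≤ ((k : ℕ) / m) * m := Nat.mul_le_mul_right m h
        have hl : lam - 1 + 1 = lam := by omega
        rw [hl] at hmul
        have e2 : ((k : ℕ) / m) * m = m * ((k : ℕ) / m) := Nat.mul_comm _ _
        have h0 : 0 ≤ (k : ℕ) % m := Nat.zero_le _
        linarith
    have hiff : (k : ℕ) % m = (i : ℕ) ↔ (k : ℕ) = (lam - 1) * m + (i : ℕ) := by
      constructor
      · intro h
        have h2 := Nat.div_add_mod (k : ℕ) m
        rw [hdiv, h] at h2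
        rw [← h2, Nat.mul_comm]
      · intro h
        rw [h, Nat.add_comm, Nat.add_mul_mod_self_right]
        exact Nat.mod_eq_of_lt i.isLt
    simp only [Vmat, Matrix.of_apply, hdiv]
    by_cases hi : (k : ℕ) % m = (i : ℕ)
    · rw [if_pos hi, if_pos (hiff.mp hi)]
    · rw [if_neg hi, if_neg (fun h => hi (hiff.mpr h))]

lemma idx_lt (m lam : ℕ) (hm : 1 ≤ m) (hlam : 1 ≤ lam) (i : Fin m) :
    (lam - 1) * m + (i : ℕ) < lam * m := by
  have : lam * m = (lam - 1) * m + m := by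
    have h3 : lam = (lam - 1) + 1 := by omega
    nth_rewrite 1 [h3]; ring
  have := i.isLt
  omega

lemma aux_mulVec (β : ℝ) (hβ : 1 < β) (m lam : ℕ) (hm : 1 ≤ m) (hlam : 1 ≤ lam)
    (u : Fin (lam * m) → ℂ) (i : Fin m) :
    (Vmat β m lam * Hmat β m (lam * m)).mulVec u i =
      ((β : ℂ))⁻¹ ^ (lam - 1) * u ⟨(lam - 1) * m + (i : ℕ), idx_lt m lam hm hlam i⟩ := by
  set k0 : Fin (lam * m) := ⟨(lam - 1) * m + (i : ℕ), idx_lt m lam hm hlam i⟩ with hk0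
  have hstep : ∀ k : Fin (lam * m),
      (Vmat β m lam * Hmat β m (lam * m)) i k * u k =
        if k = k0 then ((β : ℂ))⁻¹ ^ (lam - 1) * u k0 else 0 := by
    intro k
    rw [aux_entry β hβ m lam hm hlam i k]
    by_cases h : k = k0
    · subst h; rw [if_pos rfl, if_pos rfl]
    · rw [if_neg (fun hv => h (Fin.ext hv)), if_neg h, zero_mul]
  rw [Matrix.mulVec, dotProduct, Finset.sum_congr rfl (fun k _ => hstep k),
    Finset.sum_ite_eq' Finset.univ k0, if_pos (Finset.mem_univ k0)]

lemma aux_norm2 (β : ℝ) (hβ : 1 < β) (m lam : ℕ) (hm : 1 ≤ m) (hlam : 1 ≤ lam)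
    (u : Fin (lam * m) → ℂ) :
    norm2 ((Vmat β m lam * Hmat β m (lam * m)).mulVec u) =
      (β⁻¹) ^ (lam - 1) *
        Real.sqrt (∑ i : Fin m, ‖u ⟨(lam - 1) * m + (i : ℕ), idx_lt m lam hm hlam i⟩‖ ^ 2) := by
  have hβ0 : (0 : ℝ) < β⁻¹ ^ (lam - 1) := by positivity
  unfold norm2
  have hn : ∀ i : Fin m,
      ‖(Vmat β m lam * Hmat β m (lam * m)).mulVec u i‖ ^ 2 =
        (β⁻¹ ^ (lam - 1)) ^ 2 * ‖u ⟨(lam - 1) * m + (i : ℕ), idx_lt m lam hm hlam i⟩‖ ^ 2 := by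
    intro i
    rw [aux_mulVec β hβ m lam hm hlam u i, norm_mul, norm_pow, norm_inv, Complex.norm_real, Real.norm_eq_abs,
      abs_of_pos (by linarith : (0:ℝ) < β), mul_pow]
  rw [Finset.sum_congr rfl (fun i _ => hn i), ← Finset.mul_sum, Real.sqrt_mul (by positivity),
    Real.sqrt_sq (le_of_lt hβ0)]

/-- `‖VH‖_{∞→2} = √m · β^{-(λ-1)}`. -/
theorem statement5 (β : ℝ) (hβ : 1 < β) (m lam : ℕ) (hm : 1 ≤ m) (hlam : 1 ≤ lam) :
    sSup {x : ℝ | ∃ u : Fin (lam * m) → ℂ, (∀ j, ‖u j‖ ≤ 1) ∧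
        x = norm2 ((Vmat β m lam * Hmat β m (lam * m)).mulVec u)} =
      Real.sqrt (m : ℝ) * β ^ (-((lam : ℤ) - 1)) := by
  have hc : (0:ℝ) < β⁻¹ ^ (lam - 1) := by positivity
  have hrhs : β ^ (-((lam : ℤ) - 1)) = β⁻¹ ^ (lam - 1) := by
    have h1 : -((lam : ℤ) - 1) = -((lam - 1 : ℕ) : ℤ) := by push_cast [hlam]; omega
    rw [h1, zpow_neg, zpow_natCast, inv_pow]
  rw [hrhs]
  have hbdd : ∀ x ∈ {x : ℝ | ∃ u : Fin (lam * m) → ℂ, (∀ j, ‖u j‖ ≤ 1) ∧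
      x = norm2 ((Vmat β m lam * Hmat β m (lam * m)).mulVec u)},
      x ≤ Real.sqrt (m : ℝ) * β⁻¹ ^ (lam - 1) := by
    rintro x ⟨u, hu, rfl⟩
    rw [aux_norm2 β hβ m lam hm hlam u]
    calc β⁻¹ ^ (lam - 1) *
        Real.sqrt (∑ i : Fin m, ‖u ⟨(lam - 1) * m + (i : ℕ), idx_lt m lam hm hlam i⟩‖ ^ 2)
        ≤ β⁻¹ ^ (lam - 1) * Real.sqrt (m : ℝ) := by
          apply mul_le_mul_of_nonneg_left _ hc.le
          apply Real.sqrt_le_sqrt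
          calc (∑ i : Fin m, ‖u ⟨(lam - 1) * m + (i : ℕ), idx_lt m lam hm hlam i⟩‖ ^ 2)
              ≤ ∑ _i : Fin m, (1:ℝ) :=
                Finset.sum_le_sum fun i _ => pow_le_one₀ (norm_nonneg _) (hu _)
            _ = (m : ℝ) := by simp
      _ = Real.sqrt (m : ℝ) * β⁻¹ ^ (lam - 1) := mul_comm _ _
  have hmem : Real.sqrt (m : ℝ) * β⁻¹ ^ (lam - 1) ∈ {x : ℝ | ∃ u : Fin (lam * m) → ℂ,
      (∀ j, ‖u j‖ ≤ 1) ∧ x = norm2 ((Vmat β m lam * Hmat β m (lam * m)).mulVec u)} := by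
    refine ⟨fun _ => 1, fun j => by simp, ?_⟩
    rw [aux_norm2 β hβ m lam hm hlam]
    have : (∑ _i : Fin m, ‖(1:ℂ)‖ ^ 2) = (m : ℝ) := by simp
    rw [this, mul_comm]
  exact le_antisymm (csSup_le ⟨_, hmem⟩ hbdd) (le_csSup ⟨_, hbdd⟩ hmem)
end

section
/- Let K ≥ 2, m ≥ 1, λ ≥ 1 be integers, M = λm, and A, δ > 0 and β > 1 with β + A/δ ≤ K. Let 𝒜 := δ(𝒵_K + i𝒵_K) and let V := [I_m, β^{−1}I_m, …, β^{−(λ−1)}I_m] be the m×M matrix of λ horizontal blocks. Then for every y ∈ ℂ^M with ‖y‖_∞ ≤ A there exists q ∈ 𝒜^M such that ‖Vy − Vq‖_2 ≤ √(2m) · β^{−(λ−1)} · δ. -/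
open scoped Real
open Complex

set_option linter.unusedVariables false

lemma round1 (K : ℕ) (hK : 1 ≤ K) {δ x : ℝ} (hδ : 0 < δ) (hx : |x| ≤ K * δ) :
    ∃ a : ℤ, a ∈ ZK K ∧ |x - δ * a| ≤ δ := by
  set s : ℝ := x / δ with hs
  have hsx : x = δ * s := by
    rw [hs, mul_div_assoc', mul_comm, mul_div_assoc, div_self (ne_of_gt hδ), mul_one]
  have hsb : |s| ≤ K := by
    rw [hs, abs_div, abs_of_pos hδ, div_le_iff₀ hδ]; exact hx
  have hs1 : -(K:ℝ) ≤ s := (abs_le.1 hsb).1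
  have hs2 : s ≤ K := (abs_le.1 hsb).2
  set k0 : ℤ := ⌊(s + K) / 2⌋ with hk0
  have hk0nn : 0 ≤ k0 := Int.le_floor.2 (by push_cast; linarith)
  set k : ℤ := min ((K:ℤ) - 1) k0 with hk
  have hknn : 0 ≤ k := le_min (by omega) hk0nn
  have hkK : k < K := lt_of_le_of_lt (min_le_left _ _) (by omega)
  refine ⟨-(K:ℤ) + 1 + 2 * k, ⟨k.toNat, by omega, by omega⟩, ?_⟩
  have hfl1 : (k0 : ℝ) ≤ (s + K) / 2 := Int.floor_le _
  have hfl2 : (s + K) / 2 < k0 + 1 := Int.lt_floor_add_one _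
  have key : |s - (-(K:ℝ) + 1 + 2 * k)| ≤ 1 := by
    rcases le_or_gt k0 ((K:ℤ) - 1) with h | h
    · have : k = k0 := min_eq_right h
      rw [this, abs_le]
      have hc : (k0:ℝ) ≤ (K:ℝ) - 1 := by exact_mod_cast h
      constructor <;> nlinarith
    · have hk0K : (K:ℤ) ≤ k0 := by omega
      have : k = (K:ℤ) - 1 := min_eq_left (by omega)
      rw [this, abs_le]
      have hc : (K:ℝ) ≤ (k0:ℝ) := by exact_mod_cast hk0K
      constructor <;> [push_cast; push_cast] <;> nlinarith
  rw [show x - δ * ((-(K:ℤ) + 1 + 2 * k : ℤ) : ℝ) = δ * (s - (-(K:ℝ) + 1 + 2 * k)) by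
    push_cast [hsx]; ring]
  rw [abs_mul, abs_of_pos hδ]
  nlinarith [key]

open scoped Classical in
noncomputable def pick (K : ℕ) (δ : ℝ) (w : ℂ) : ℂ :=
  if h : ∃ q, q ∈ alphabet K δ ∧ |(w - q).re| ≤ δ ∧ |(w - q).im| ≤ δ then h.choose else 0

lemma pick_spec (K : ℕ) (hK : 1 ≤ K) {δ : ℝ} (hδ : 0 < δ) {w : ℂ}
    (h1 : |w.re| ≤ K * δ) (h2 : |w.im| ≤ K * δ) :
    pick K δ w ∈ alphabet K δ ∧ |(w - pick K δ w).re| ≤ δ ∧ |(w - pick K δ w).im| ≤ δ := by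
  have hex : ∃ q, q ∈ alphabet K δ ∧ |(w - q).re| ≤ δ ∧ |(w - q).im| ≤ δ := by
    obtain ⟨a, ha, hxa⟩ := round1 K hK hδ h1
    obtain ⟨b, hb, hxb⟩ := round1 K hK hδ h2
    refine ⟨(δ:ℂ) * ((a:ℂ) + (b:ℂ) * Complex.I), ⟨a, b, ha, hb, rfl⟩, ?_, ?_⟩
    · simpa using hxa
    · simpa using hxb
  classical
  rw [pick]
  rw [dif_pos hex]
  exact hex.choose_spec

noncomputable def qstate (K : ℕ) (δ β : ℝ) (f : ℕ → ℂ) : ℕ → ℂ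
  | 0 => 0
  | n + 1 => ((β:ℂ) * qstate K δ β f n + f n) - pick K δ ((β:ℂ) * qstate K δ β f n + f n)

lemma qstate_bound (K : ℕ) (hK : 1 ≤ K) {δ β A : ℝ} (hδ : 0 < δ) (hβ : 0 < β)
    (hA : 0 ≤ A) (hparam : β * δ + A ≤ K * δ) (f : ℕ → ℂ) (hf : ∀ n, ‖f n‖ ≤ A) :
    ∀ n, |(qstate K δ β f n).re| ≤ δ ∧ |(qstate K δ β f n).im| ≤ δ := by
  intro n
  induction n with
  | zero => simp [qstate, hδ.le]
  | succ n ih =>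
    set w : ℂ := (β:ℂ) * qstate K δ β f n + f n with hw
    have hwre : |w.re| ≤ K * δ := by
      have h1 : w.re = β * (qstate K δ β f n).re + (f n).re := by simp [hw]
      rw [h1]
      calc |β * (qstate K δ β f n).re + (f n).re|
          ≤ β * |(qstate K δ β f n).re| + |(f n).re| := by
            rw [← abs_of_pos hβ, ← abs_mul, abs_of_pos hβ]; exact abs_add_le _ _
        _ ≤ β * δ + A := by
            have := Complex.abs_re_le_norm (f n)
            have hfn : ‖f n‖ ≤ A := hf n
            have := ih.1
            nlinarith
        _ ≤ K * δ := hparam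
    have hwim : |w.im| ≤ K * δ := by
      have h1 : w.im = β * (qstate K δ β f n).im + (f n).im := by simp [hw]
      rw [h1]
      calc |β * (qstate K δ β f n).im + (f n).im|
          ≤ β * |(qstate K δ β f n).im| + |(f n).im| := by
            rw [← abs_of_pos hβ, ← abs_mul, abs_of_pos hβ]; exact abs_add_le _ _
        _ ≤ β * δ + A := by
            have := Complex.abs_im_le_norm (f n)
            have hfn : ‖f n‖ ≤ A := hf n
            have := ih.2
            nlinarith
        _ ≤ K * δ := hparam
    have := (pick_spec K hK hδ hwre hwim).2
    exact ⟨this.1, this.2⟩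

lemma qstate_mem (K : ℕ) (hK : 1 ≤ K) {δ β A : ℝ} (hδ : 0 < δ) (hβ : 0 < β)
    (hA : 0 ≤ A) (hparam : β * δ + A ≤ K * δ) (f : ℕ → ℂ) (hf : ∀ n, ‖f n‖ ≤ A) (n : ℕ) :
    pick K δ ((β:ℂ) * qstate K δ β f n + f n) ∈ alphabet K δ := by
  have hb := qstate_bound K hK hδ hβ hA hparam f hf n
  set w : ℂ := (β:ℂ) * qstate K δ β f n + f n with hw
  have hwre : |w.re| ≤ K * δ := by
    have h1 : w.re = β * (qstate K δ β f n).re + (f n).re := by simp [hw]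
    rw [h1]
    have h2 := Complex.abs_re_le_norm (f n)
    have h3 : ‖f n‖ ≤ A := hf n
    have := abs_add_le (β * (qstate K δ β f n).re) ((f n).re)
    have h4 : |β * (qstate K δ β f n).re| = β * |(qstate K δ β f n).re| := by
      rw [abs_mul, abs_of_pos hβ]
    nlinarith [hb.1]
  have hwim : |w.im| ≤ K * δ := by
    have h1 : w.im = β * (qstate K δ β f n).im + (f n).im := by simp [hw]
    rw [h1]
    have h2 := Complex.abs_im_le_norm (f n)
    have h3 : ‖f n‖ ≤ A := hf n
    have := abs_add_le (β * (qstate K δ β f n).im) ((f n).im)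
    have h4 : |β * (qstate K δ β f n).im| = β * |(qstate K δ β f n).im| := by
      rw [abs_mul, abs_of_pos hβ]
    nlinarith [hb.2]
  exact (pick_spec K hK hδ hwre hwim).1

lemma qstate_tele (K : ℕ) (δ : ℝ) {β : ℝ} (hβ : β ≠ 0) (f : ℕ → ℂ) (n : ℕ) :
    ∑ k ∈ Finset.range n,
        ((β:ℂ))⁻¹ ^ k * (f k - pick K δ ((β:ℂ) * qstate K δ β f k + f k))
      = (β:ℂ) * ((β:ℂ))⁻¹ ^ n * qstate K δ β f n := by
  have hβc : (β:ℂ) ≠ 0 := by exact_mod_cast hβ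
  induction n with
  | zero => simp [qstate]
  | succ n ih =>
    rw [Finset.sum_range_succ, ih, show qstate K δ β f (n+1)
      = ((β:ℂ) * qstate K δ β f n + f n) - pick K δ ((β:ℂ) * qstate K δ β f n + f n) from rfl]
    have h1 : (β:ℂ) * (β:ℂ)⁻¹ = 1 := mul_inv_cancel₀ hβc
    linear_combination (-((β:ℂ)⁻¹ ^ n * ((β:ℂ) * qstate K δ β f n + f n
      - pick K δ ((β:ℂ) * qstate K δ β f n + f n)))) * h1

lemma sum_blocks (m : ℕ) (i : ℕ) (hi : i < m) (F : ℕ → ℂ) (lam : ℕ) :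
    ∑ n ∈ Finset.range (lam * m), (if n % m = i then F n else 0)
      = ∑ k ∈ Finset.range lam, F (k * m + i) := by
  induction lam with
  | zero => simp
  | succ lam ih =>
    rw [Nat.succ_mul, Finset.sum_range_succ, ← ih, Finset.range_eq_Ico,
      ← Finset.sum_Ico_consecutive _ (Nat.zero_le (lam * m)) (Nat.le_add_right (lam * m) m),
      ← Finset.range_eq_Ico]
    congr 1
    rw [Finset.sum_Ico_eq_sum_range]
    simp only [Nat.add_sub_cancel_left, Nat.add_sub_cancel]
    rw [Finset.sum_congr rfl (fun r hr => ?_), Finset.sum_ite_eq' (Finset.range m) i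
      (fun _ => F (lam * m + i))]
    · simp [Finset.mem_range.2 hi]
    · have hrm : r < m := Finset.mem_range.1 hr
      have h1 : (lam * m + r) % m = r := by simp [Nat.add_mod, Nat.mul_mod_left, Nat.mod_eq_of_lt hrm]
      rw [h1]
      by_cases h : r = i
      · subst h; simp
      · simp [h]

/-- for every `y` with `‖y‖_∞ ≤ A` there is `q ∈ 𝒜^M` with
`‖Vy - Vq‖_2 ≤ √(2m) β^{-(λ-1)} δ`. -/
theorem statement6 (K m lam : ℕ) (hK : 2 ≤ K) (hm : 1 ≤ m) (hlam : 1 ≤ lam)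
    (A δ β : ℝ) (hA : 0 < A) (hδ : 0 < δ) (hβ : 1 < β)
    (hparam : β + A / δ ≤ (K : ℝ))
    (y : Fin (lam * m) → ℂ) (hy : ∀ j, ‖y j‖ ≤ A) :
    ∃ q : Fin (lam * m) → ℂ, (∀ j, q j ∈ alphabet K δ) ∧
      norm2 ((Vmat β m lam).mulVec y - (Vmat β m lam).mulVec q) ≤
        Real.sqrt (2 * (m : ℝ)) * β ^ (-((lam : ℤ) - 1)) * δ := by
  have hβ0 : 0 < β := lt_trans one_pos hβ
  have hβne : β ≠ 0 := ne_of_gt hβ0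
  have hK1 : 1 ≤ K := le_trans (by norm_num) hK
  have hparam' : β * δ + A ≤ K * δ := by
    have := mul_le_mul_of_nonneg_right hparam hδ.le
    rw [add_mul, div_mul_cancel₀ _ (ne_of_gt hδ)] at this
    linarith
  set f : ℕ → ℕ → ℂ := fun i k => if h : k * m + i < lam * m then y ⟨k * m + i, h⟩ else 0
    with hf
  have hfb : ∀ i k, ‖f i k‖ ≤ A := by
    intro i k
    simp only [hf]
    by_cases h : k * m + i < lam * m
    · rw [dif_pos h]; exact hy _
    · rw [dif_neg h]; simp [hA.le]
  set q : Fin (lam * m) → ℂ := fun j =>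
    pick K δ ((β:ℂ) * qstate K δ β (f ((j : ℕ) % m)) ((j : ℕ) / m)
      + f ((j : ℕ) % m) ((j : ℕ) / m)) with hq
  refine ⟨q, fun j => qstate_mem K hK1 hδ hβ0 hA.le hparam' _ (hfb _) _, ?_⟩
  have key : ∀ i : Fin m, ((Vmat β m lam).mulVec y - (Vmat β m lam).mulVec q) i
      = (β:ℂ) * ((β:ℂ))⁻¹ ^ lam * qstate K δ β (f (i : ℕ)) lam := by
    intro i
    have hsub : ((Vmat β m lam).mulVec y - (Vmat β m lam).mulVec q) i
        = ∑ j : Fin (lam * m), Vmat β m lam i j * (y j - q j) := by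
      simp [Matrix.mulVec, dotProduct, mul_sub, Finset.sum_sub_distrib]
    rw [hsub]
    set Z : ℕ → ℂ := fun n => if h : n < lam * m then y ⟨n, h⟩ - q ⟨n, h⟩ else 0 with hZ
    have h1 : ∑ j : Fin (lam * m), Vmat β m lam i j * (y j - q j)
        = ∑ n ∈ Finset.range (lam * m),
            (if n % m = (i : ℕ) then ((β:ℂ))⁻¹ ^ (n / m) * Z n else 0) := by
      rw [← Fin.sum_univ_eq_sum_range
        (fun n => if n % m = (i : ℕ) then ((β:ℂ))⁻¹ ^ (n / m) * Z n else 0) (lam * m)]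
      refine Finset.sum_congr rfl fun j _ => ?_
      by_cases h : (j : ℕ) % m = (i : ℕ) <;> simp [Vmat, h, hZ, j.isLt]
    rw [h1, sum_blocks m (i : ℕ) i.isLt _ lam, ← qstate_tele K δ hβne (f (i : ℕ)) lam]
    refine Finset.sum_congr rfl fun k hk => ?_
    have hk' : k < lam := Finset.mem_range.1 hk
    have hlt : k * m + (i : ℕ) < lam * m := by
      have h2 : (k + 1) * m ≤ lam * m := Nat.mul_le_mul_right m hk'
      have h3 : k * m + (i : ℕ) < (k + 1) * m := by
        rw [Nat.succ_mul]; exact Nat.add_lt_add_left i.isLt _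
      omega
    have hdiv : (k * m + (i : ℕ)) / m = k := by
      rw [mul_comm, Nat.mul_add_div (by omega)]
      simp [Nat.div_eq_of_lt i.isLt]
    have hmod : (k * m + (i : ℕ)) % m = (i : ℕ) := by
      simp [Nat.add_mod, Nat.mul_mod_left, Nat.mod_eq_of_lt i.isLt]
    have hZk : Z (k * m + (i : ℕ)) = f (i : ℕ) k
        - pick K δ ((β:ℂ) * qstate K δ β (f (i : ℕ)) k + f (i : ℕ) k) := by
      rw [hZ]
      simp only [hlt, dif_pos]
      congr 1
      · simp [hf, hlt]
      · rw [hq]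
        simp only [hmod, hdiv]
    rw [hdiv, hZk]
  rw [norm2]
  set c : ℝ := β * β⁻¹ ^ lam * (Real.sqrt 2 * δ) with hc
  have hc0 : 0 ≤ c := by positivity
  have hb : ∀ i : Fin m,
      ‖((Vmat β m lam).mulVec y - (Vmat β m lam).mulVec q) i‖ ≤ c := by
    intro i
    rw [key i, norm_mul, norm_mul]
    have e1 : ‖(β:ℂ)‖ = β := by simp [abs_of_pos hβ0]
    have e2 : ‖((β:ℂ))⁻¹ ^ lam‖ = β⁻¹ ^ lam := by
      rw [norm_pow, norm_inv]
      simp [abs_of_pos hβ0]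
    have e3 : ‖qstate K δ β (f (i : ℕ)) lam‖ ≤ Real.sqrt 2 * δ := by
      obtain ⟨hre, him⟩ := qstate_bound K hK1 hδ hβ0 hA.le hparam' (f (i : ℕ)) (hfb _) lam
      set z := qstate K δ β (f (i : ℕ)) lam
      have : ‖z‖ = Real.sqrt (z.re * z.re + z.im * z.im) := by
        rw [Complex.norm_def, Complex.normSq_apply]
      rw [this]
      have h2 : z.re * z.re + z.im * z.im ≤ 2 * δ ^ 2 := by
        nlinarith [mul_self_le_mul_self (abs_nonneg z.re) hre,
          mul_self_le_mul_self (abs_nonneg z.im) him,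
          abs_mul_abs_self z.re, abs_mul_abs_self z.im]
      calc Real.sqrt (z.re * z.re + z.im * z.im) ≤ Real.sqrt (2 * δ ^ 2) :=
            Real.sqrt_le_sqrt h2
        _ = Real.sqrt 2 * δ := by
            rw [Real.sqrt_mul (by norm_num), Real.sqrt_sq hδ.le]
    rw [e1, e2, hc]
    have hp : 0 ≤ β * β⁻¹ ^ lam := by positivity
    calc β * β⁻¹ ^ lam * ‖qstate K δ β (f (i : ℕ)) lam‖
        ≤ β * β⁻¹ ^ lam * (Real.sqrt 2 * δ) := by
          exact mul_le_mul_of_nonneg_left e3 hp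
      _ = _ := rfl
  have hsum : ∑ i : Fin m, ‖((Vmat β m lam).mulVec y - (Vmat β m lam).mulVec q) i‖ ^ 2
      ≤ (m : ℝ) * c ^ 2 := by
    calc ∑ i : Fin m, ‖((Vmat β m lam).mulVec y - (Vmat β m lam).mulVec q) i‖ ^ 2
        ≤ ∑ _i : Fin m, c ^ 2 :=
          Finset.sum_le_sum fun i _ => pow_le_pow_left₀ (norm_nonneg _) (hb i) 2
      _ = (m : ℝ) * c ^ 2 := by simp [Finset.sum_const, Finset.card_univ, mul_comm]
  have hz : β ^ (-((lam : ℤ) - 1)) = β * β⁻¹ ^ lam := by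
    rw [show -((lam : ℤ) - 1) = 1 + -(lam : ℤ) by ring, zpow_add₀ hβne, zpow_one,
      zpow_neg, zpow_natCast, ← inv_pow]
  calc Real.sqrt (∑ i : Fin m, ‖((Vmat β m lam).mulVec y - (Vmat β m lam).mulVec q) i‖ ^ 2)
      ≤ Real.sqrt ((m : ℝ) * c ^ 2) := Real.sqrt_le_sqrt hsum
    _ = Real.sqrt m * c := by
        rw [Real.sqrt_mul (Nat.cast_nonneg m), Real.sqrt_sq hc0]
    _ = Real.sqrt (2 * (m : ℝ)) * β ^ (-((lam : ℤ) - 1)) * δ := by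
        rw [Real.sqrt_mul (by norm_num : (0:ℝ) ≤ 2), hz, hc]; ring
end
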